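/- Let G be a finite group and let (ρ, V) be an irreducible 2-dimensional complex representation of G. Then Ad⁰(ρ) is reducible (i.e., the space sl(V) of trace-zero endomorphisms of V has a G-invariant subspace other than 0 and sl(V)) if and only if there exists a group homomorphism α : G → ℂˣ with α ≠ 1 such that α ⊗ ρ ≅ ρ. Moreover, when such an α exists, the one-dimensional representation α is isomorphic to a subrepresentation of Ad⁰(ρ). -/

import Mathlib

open LinearMap

set_option linter.unusedSectionVars false
set_option maxHeartbeats 1000000

section AuxForAd0

variable {V : Type*} [AddCommGroup V] [Module ℂ V] [FiniteDimensional ℂ V]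
variable {G : Type*} [Group G]

private lemma aux_happ (ρ : Representation ℂ G V) (g : G) (v : V) :
    ρ g (ρ g⁻¹ v) = v := by
  rw [← Module.End.mul_apply, ← map_mul, mul_inv_cancel, map_one, Module.End.one_apply]

private lemma aux_happ' (ρ : Representation ℂ G V) (g : G) (v : V) :
    ρ g⁻¹ (ρ g v) = v := by
  rw [← Module.End.mul_apply, ← map_mul, inv_mul_cancel, map_one, Module.End.one_apply]

private lemma aux_trace_smulRight (φ : Module.Dual ℂ V) (y : V) :
    LinearMap.trace ℂ V (φ.smulRight y) = φ y := by
  have h : φ.smulRight y = dualTensorHom ℂ V V (φ ⊗ₜ y) := by ext x; simp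
  rw [h, trace_eq_contract_apply, contractLeft_apply]

private lemma aux_nondeg (u : V →ₗ[ℂ] V)
    (h : ∀ w : V →ₗ[ℂ] V, LinearMap.trace ℂ V (u ∘ₗ w) = 0) : u = 0 := by
  ext v
  rw [LinearMap.zero_apply]
  by_contra hv
  obtain ⟨φ, hφ⟩ : ∃ φ : Module.Dual ℂ V, φ (u v) ≠ 0 := by
    by_contra hall
    push_neg at hall
    exact hv ((Module.forall_dual_apply_eq_zero_iff ℂ (u v)).mp hall)
  have h1 := h (φ.smulRight v)
  have h2 : u ∘ₗ φ.smulRight v = φ.smulRight (u v) := by ext x; simp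
  rw [h2, aux_trace_smulRight] at h1
  exact hφ h1

private lemma aux_schur (hdim : Module.finrank ℂ V = 2)
    (ρ : Representation ℂ G V)
    (hirr : ∀ W : Submodule ℂ V, (∀ g : G, ∀ v ∈ W, ρ g v ∈ W) → W = ⊥ ∨ W = ⊤)
    (f : V →ₗ[ℂ] V) (hcomm : ∀ g : G, ρ g ∘ₗ f = f ∘ₗ ρ g) :
    ∃ μ : ℂ, f = μ • (1 : V →ₗ[ℂ] V) := by
  have : Nontrivial V := Module.nontrivial_of_finrank_eq_succ hdim
  obtain ⟨μ, hμ⟩ := Module.End.exists_eigenvalue (f : Module.End ℂ V)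
  refine ⟨μ, ?_⟩
  have hst : ∀ g : G, ∀ v ∈ Module.End.eigenspace f μ, ρ g v ∈ Module.End.eigenspace f μ := by
    intro g v hv
    rw [Module.End.mem_eigenspace_iff] at hv ⊢
    have h2 := congrArg (fun (m : V →ₗ[ℂ] V) => m v) (hcomm g)
    simp only [comp_apply] at h2
    rw [← h2, hv, map_smul]
  have hW : Module.End.eigenspace f μ = ⊤ := by
    rcases hirr (Module.End.eigenspace f μ) hst with h | h
    · exact absurd h hμ
    · exact h
  ext v
  have hv : v ∈ Module.End.eigenspace f μ := hW ▸ Submodule.mem_top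
  rw [Module.End.mem_eigenspace_iff] at hv
  simpa using hv

private lemma aux_line (hdim : Module.finrank ℂ V = 2)
    (ρ : Representation ℂ G V)
    (hirr : ∀ W : Submodule ℂ V, (∀ g : G, ∀ v ∈ W, ρ g v ∈ W) → W = ⊥ ∨ W = ⊤)
    (f : V →ₗ[ℂ] V) (hf0 : f ≠ 0) (hftr : LinearMap.trace ℂ V f = 0)
    (hline : ∀ g : G, ∃ c : ℂ, ρ g ∘ₗ f ∘ₗ ρ g⁻¹ = c • f) :
    ∃ α : G →* ℂˣ, α ≠ 1 ∧
      ∃ T : V ≃ₗ[ℂ] V, ∀ (g : G) (v : V), T ((α g : ℂ) • ρ g v) = ρ g (T v) := by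
  choose c hc using hline
  have huniq : ∀ {a b : ℂ}, a • f = b • f → a = b := by
    intro a b hab
    by_contra hne
    have h0 : (a - b) • f = 0 := by rw [sub_smul, hab, sub_self]
    rcases smul_eq_zero.mp h0 with h | h
    · exact hne (sub_eq_zero.mp h)
    · exact hf0 h
  have hpt : ∀ (g : G) (v : V), ρ g (f (ρ g⁻¹ v)) = c g • f v := by
    intro g v
    have := congrArg (fun m : V →ₗ[ℂ] V => m v) (hc g)
    simpa using this
  have hstar : ∀ (g : G) (v : V), ρ g (f v) = c g • f (ρ g v) := by
    intro g v
    have := hpt g (ρ g v)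
    rwa [aux_happ' ρ g v] at this
  have hmul : ∀ g h : G, c (g * h) = c g * c h := by
    intro g h
    apply huniq
    rw [← hc (g * h)]
    ext v
    simp only [comp_apply, LinearMap.smul_apply, mul_inv_rev, map_mul, Module.End.mul_apply]
    rw [hpt h, map_smul, hpt g, smul_smul, mul_comm]
  have h1 : c 1 = 1 := by
    apply huniq
    rw [← hc 1]
    ext v
    simp
  have hinvc : ∀ g : G, c g * c g⁻¹ = 1 := by
    intro g
    rw [← hmul, mul_inv_cancel, h1]
  have hcne : ∀ g : G, c g ≠ 0 := by
    intro g hg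
    have := hinvc g
    rw [hg, zero_mul] at this
    exact zero_ne_one this
  refine ⟨{ toFun := fun g => ⟨c g, c g⁻¹, hinvc g, by rw [← hmul, inv_mul_cancel, h1]⟩,
            map_one' := Units.ext h1,
            map_mul' := fun g h => Units.ext (hmul g h) }, ?_, ?_⟩
  · intro heq
    have hall : ∀ g : G, c g = 1 := by
      intro g
      have := congrArg (fun m : G →* ℂˣ => ((m g : ℂˣ) : ℂ)) heq
      simpa using this
    have hcomm : ∀ g : G, ρ g ∘ₗ f = f ∘ₗ ρ g := by
      intro g
      ext v
      simp only [comp_apply]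
      rw [hstar g v, hall g, one_smul]
    obtain ⟨μ, hμ⟩ := aux_schur hdim ρ hirr f hcomm
    have htr2 : LinearMap.trace ℂ V f = μ * 2 := by
      rw [hμ, map_smul, trace_one, hdim]
      norm_num
    rw [hftr] at htr2
    have hμ0 : μ = 0 := by
      have := htr2.symm
      simpa using this
    rw [hμ0, zero_smul] at hμ
    exact hf0 hμ
  · have hst : ∀ g : G, ∀ v ∈ LinearMap.ker f, ρ g v ∈ LinearMap.ker f := by
      intro g v hv
      rw [LinearMap.mem_ker] at hv ⊢
      have := hstar g v
      rw [hv, map_zero] at this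
      exact (smul_eq_zero.mp this.symm).resolve_left (hcne g)
    have hker : LinearMap.ker f = ⊥ := by
      rcases hirr (LinearMap.ker f) hst with h | h
      · exact h
      · exact absurd (LinearMap.ker_eq_top.mp h) hf0
    have hinj : Function.Injective f := LinearMap.ker_eq_bot.mp hker
    have hsurj : Function.Surjective f := (LinearMap.injective_iff_surjective).mp hinj
    refine ⟨LinearEquiv.ofBijective f ⟨hinj, hsurj⟩, fun g v => ?_⟩
    simp only [LinearEquiv.ofBijective_apply, map_smul]
    exact (hstar g v).symm

private lemma aux_part2 (hdim : Module.finrank ℂ V = 2)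
    (ρ : Representation ℂ G V)
    (α : G →* ℂˣ) (hα : α ≠ 1)
    (h : ∃ T : V ≃ₗ[ℂ] V, ∀ (g : G) (v : V), T ((α g : ℂ) • ρ g v) = ρ g (T v)) :
    ∃ f : V →ₗ[ℂ] V, f ∈ LinearMap.ker (LinearMap.trace ℂ V) ∧ f ≠ 0 ∧
      ∀ g : G, ρ g ∘ₗ f ∘ₗ ρ g⁻¹ = (α g : ℂ) • f := by
  obtain ⟨T, hT⟩ := h
  have hconj : ∀ g : G, ρ g ∘ₗ (T : V →ₗ[ℂ] V) ∘ₗ ρ g⁻¹ = (α g : ℂ) • (T : V →ₗ[ℂ] V) := by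
    intro g
    ext v
    simp only [comp_apply, LinearMap.smul_apply, LinearEquiv.coe_coe]
    rw [← hT g (ρ g⁻¹ v), aux_happ ρ g v, map_smul]
  obtain ⟨g₀, hg₀⟩ : ∃ g : G, α g ≠ 1 := by
    by_contra hall
    push_neg at hall
    exact hα (MonoidHom.ext fun g => by rw [hall g]; rfl)
  have hval : ((α g₀ : ℂˣ) : ℂ) ≠ 1 := fun hh => hg₀ (Units.ext (by simpa using hh))
  have htr : LinearMap.trace ℂ V (T : V →ₗ[ℂ] V) = 0 := by
    have hρinv : (T : V →ₗ[ℂ] V) ∘ₗ ρ g₀⁻¹ ∘ₗ ρ g₀ = (T : V →ₗ[ℂ] V) := by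
      ext v; simp [aux_happ' ρ g₀ v]
    have e1 : LinearMap.trace ℂ V (ρ g₀ ∘ₗ (T : V →ₗ[ℂ] V) ∘ₗ ρ g₀⁻¹)
        = LinearMap.trace ℂ V (T : V →ₗ[ℂ] V) := by
      rw [LinearMap.trace_comp_comm' ((T : V →ₗ[ℂ] V) ∘ₗ ρ g₀⁻¹) (ρ g₀), LinearMap.comp_assoc,
        hρinv]
    rw [hconj g₀, map_smul, smul_eq_mul] at e1
    by_contra h0
    exact hval (mul_right_cancel₀ h0 (by rw [one_mul]; exact e1))
  have : Nontrivial V := Module.nontrivial_of_finrank_eq_succ hdim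
  obtain ⟨v₀, hv₀⟩ := exists_ne (0 : V)
  refine ⟨(T : V →ₗ[ℂ] V), LinearMap.mem_ker.mpr htr, ?_, hconj⟩
  intro h0
  apply hv₀
  have hz : T v₀ = 0 := by rw [show T v₀ = ((T : V →ₗ[ℂ] V)) v₀ from rfl, h0]; rfl
  exact (LinearEquiv.map_eq_zero_iff T).mp hz

private lemma aux_kerdim (hdim : Module.finrank ℂ V = 2) :
    Module.finrank ℂ (LinearMap.ker (LinearMap.trace ℂ V)) = 3 := by
  have hE : Module.finrank ℂ (V →ₗ[ℂ] V) = 4 := by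
    rw [Module.finrank_linearMap, hdim]
  have hone : LinearMap.trace ℂ V (1 : V →ₗ[ℂ] V) = 2 := by
    rw [trace_one, hdim]; norm_num
  have hsurj : LinearMap.range (LinearMap.trace ℂ V) = ⊤ := by
    rw [LinearMap.range_eq_top]
    intro x
    refine ⟨(x / 2) • 1, ?_⟩
    rw [map_smul, hone, smul_eq_mul]
    ring
  have h := (LinearMap.trace ℂ V).finrank_range_add_finrank_ker
  rw [hsurj, finrank_top, Module.finrank_self, hE] at h
  omega

private lemma aux_findline (hdim : Module.finrank ℂ V = 2)
    (ρ : Representation ℂ G V)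
    (W : Submodule ℂ (V →ₗ[ℂ] V))
    (hWle : W ≤ LinearMap.ker (LinearMap.trace ℂ V)) (hWbot : W ≠ ⊥)
    (hWne : W ≠ LinearMap.ker (LinearMap.trace ℂ V))
    (hWinv : ∀ g : G, ∀ f ∈ W, ρ g ∘ₗ f ∘ₗ ρ g⁻¹ ∈ W) :
    ∃ U : Submodule ℂ (V →ₗ[ℂ] V), Module.finrank ℂ U = 1 ∧
      U ≤ LinearMap.ker (LinearMap.trace ℂ V) ∧
      ∀ g : G, ∀ u ∈ U, ρ g ∘ₗ u ∘ₗ ρ g⁻¹ ∈ U := by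
  have hK3 := aux_kerdim (V := V) hdim
  have hE : Module.finrank ℂ (V →ₗ[ℂ] V) = 4 := by
    rw [Module.finrank_linearMap, hdim]
  have hone : LinearMap.trace ℂ V (1 : V →ₗ[ℂ] V) = 2 := by
    rw [trace_one, hdim]; norm_num
  have hWpos : 0 < Module.finrank ℂ W := by
    rcases Nat.eq_zero_or_pos (Module.finrank ℂ W) with h | h
    · exact absurd (Submodule.finrank_eq_zero.mp h) hWbot
    · exact h
  have hWlt : Module.finrank ℂ W < 3 := by
    have := Submodule.finrank_lt_finrank_of_lt (lt_of_le_of_ne hWle hWne)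
    rwa [hK3] at this
  rcases (by omega : Module.finrank ℂ W = 1 ∨ Module.finrank ℂ W = 2) with h1 | h2
  · exact ⟨W, h1, hWle, hWinv⟩
  · have hone0 : (1 : V →ₗ[ℂ] V) ≠ 0 := by
      intro h; rw [h, map_zero] at hone; norm_num at hone
    set W₁ : Submodule ℂ (V →ₗ[ℂ] V) := (ℂ ∙ (1 : V →ₗ[ℂ] V)) ⊔ W with hW₁
    have hdisj : (ℂ ∙ (1 : V →ₗ[ℂ] V)) ⊓ W = ⊥ := by
      rw [Submodule.eq_bot_iff]
      rintro x ⟨hx1, hxW⟩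
      obtain ⟨a, ha⟩ := Submodule.mem_span_singleton.mp hx1
      have hx0 : LinearMap.trace ℂ V x = 0 := LinearMap.mem_ker.mp (hWle hxW)
      rw [← ha, map_smul, hone, smul_eq_mul] at hx0
      have ha0 : a = 0 := by
        rcases mul_eq_zero.mp hx0 with h | h
        · exact h
        · norm_num at h
      rw [← ha, ha0, zero_smul]
    have hW₁rank : Module.finrank ℂ W₁ = 3 := by
      have hh := Submodule.finrank_sup_add_finrank_inf_eq (ℂ ∙ (1 : V →ₗ[ℂ] V)) W
      rw [hdisj, finrank_bot, finrank_span_singleton hone0, h2] at hh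
      rw [hW₁]
      omega
    set ψ : (V →ₗ[ℂ] V) →ₗ[ℂ] Module.Dual ℂ (V →ₗ[ℂ] V) :=
      (LinearMap.mul ℂ (V →ₗ[ℂ] V)).compr₂ (LinearMap.trace ℂ V) with hψ
    have hψapp : ∀ u w : V →ₗ[ℂ] V, ψ u w = LinearMap.trace ℂ V (u ∘ₗ w) := by
      intro u w
      simp [hψ, LinearMap.mul_apply', Module.End.mul_eq_comp]
    set Φ : (V →ₗ[ℂ] V) →ₗ[ℂ] Module.Dual ℂ W₁ := W₁.dualRestrict ∘ₗ ψ with hΦ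
    have hΦmem : ∀ u : V →ₗ[ℂ] V,
        u ∈ LinearMap.ker Φ ↔ ∀ w ∈ W₁, LinearMap.trace ℂ V (u ∘ₗ w) = 0 := by
      intro u
      rw [LinearMap.mem_ker]
      constructor
      · intro h w hw
        have := congrArg (fun m : Module.Dual ℂ W₁ => m ⟨w, hw⟩) h
        simpa [hΦ, Submodule.dualRestrict_apply, hψapp] using this
      · intro h
        ext w
        simpa [hΦ, Submodule.dualRestrict_apply, hψapp] using h w.1 w.2
    have hψinj : Function.Injective ψ := by
      rw [← LinearMap.ker_eq_bot, Submodule.eq_bot_iff]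
      intro u hu
      rw [LinearMap.mem_ker] at hu
      apply aux_nondeg
      intro w
      rw [← hψapp u w, hu]
      rfl
    have hψsurj : Function.Surjective ψ :=
      (LinearMap.injective_iff_surjective_of_finrank_eq_finrank
        (Subspace.dual_finrank_eq).symm).mp hψinj
    have hΦsurj : Function.Surjective Φ := by
      rw [hΦ, LinearMap.coe_comp]
      exact (Subspace.dualRestrict_surjective (W := W₁)).comp hψsurj
    have hUrank : Module.finrank ℂ (LinearMap.ker Φ) = 1 := by
      have hh := Φ.finrank_range_add_finrank_ker
      rw [LinearMap.range_eq_top.mpr hΦsurj, finrank_top] at hh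
      have hd : Module.finrank ℂ (Module.Dual ℂ W₁) = 3 := by
        rw [Subspace.dual_finrank_eq, hW₁rank]
      rw [hd, hE] at hh
      omega
    refine ⟨LinearMap.ker Φ, hUrank, ?_, ?_⟩
    · intro u hu
      rw [LinearMap.mem_ker]
      have h1mem : (1 : V →ₗ[ℂ] V) ∈ W₁ :=
        Submodule.mem_sup_left (Submodule.mem_span_singleton_self _)
      have := (hΦmem u).mp hu (1 : V →ₗ[ℂ] V) h1mem
      have hco : u ∘ₗ (1 : V →ₗ[ℂ] V) = u := by ext x; simp
      rwa [hco] at this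
    · intro g u hu
      rw [hΦmem]
      intro w hw
      have htr : LinearMap.trace ℂ V ((ρ g ∘ₗ u ∘ₗ ρ g⁻¹) ∘ₗ w)
          = LinearMap.trace ℂ V (u ∘ₗ (ρ g⁻¹ ∘ₗ w ∘ₗ ρ g)) := by
        have hassoc : (ρ g ∘ₗ u ∘ₗ ρ g⁻¹) ∘ₗ w = ρ g ∘ₗ (u ∘ₗ (ρ g⁻¹ ∘ₗ w)) := by
          ext x; simp
        rw [hassoc, LinearMap.trace_comp_comm' (u ∘ₗ (ρ g⁻¹ ∘ₗ w)) (ρ g)]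
        rfl
      rw [htr]
      have hw' : ρ g⁻¹ ∘ₗ w ∘ₗ ρ g ∈ W₁ := by
        obtain ⟨x, hx, y, hy, hxy⟩ := Submodule.mem_sup.mp hw
        obtain ⟨a, ha⟩ := Submodule.mem_span_singleton.mp hx
        have hsplit : ρ g⁻¹ ∘ₗ w ∘ₗ ρ g
            = a • (1 : V →ₗ[ℂ] V) + (ρ g⁻¹ ∘ₗ y ∘ₗ ρ (g⁻¹)⁻¹) := by
          rw [inv_inv]
          ext v
          rw [← hxy, ← ha]
          simp only [comp_apply, LinearMap.add_apply, LinearMap.smul_apply, Module.End.one_apply, map_add, map_smul,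
            LinearMap.add_apply]
          rw [aux_happ' ρ g v]
        rw [hsplit]
        exact Submodule.add_mem _
          (Submodule.mem_sup_left (Submodule.smul_mem _ a (Submodule.mem_span_singleton_self _)))
          (Submodule.mem_sup_right (hWinv g⁻¹ y hy))
      exact (hΦmem u).mp hu _ hw'

end AuxForAd0

/-- For a finite group `G` and an irreducible 2-dimensional complex representation
`ρ` of `G`, the adjoint representation `Ad⁰(ρ)` on the trace-zero endomorphisms
`sl(V)` is reducible if and only if there is a nontrivial character `α : G → ℂˣ`
with `α ⊗ ρ ≅ ρ`; and in that case `α` occurs as a subrepresentation of `Ad⁰(ρ)`. -/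
theorem ad0_reducible_iff_twist_equiv
    {G : Type*} [Group G] [Finite G]
    {V : Type*} [AddCommGroup V] [Module ℂ V] [FiniteDimensional ℂ V]
    (hdim : Module.finrank ℂ V = 2)
    (ρ : Representation ℂ G V)
    (hirr : ∀ W : Submodule ℂ V, (∀ g : G, ∀ v ∈ W, ρ g v ∈ W) → W = ⊥ ∨ W = ⊤) :
    ((∃ W : Submodule ℂ (V →ₗ[ℂ] V),
        W ≤ LinearMap.ker (LinearMap.trace ℂ V) ∧ W ≠ ⊥ ∧
        W ≠ LinearMap.ker (LinearMap.trace ℂ V) ∧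
        ∀ g : G, ∀ f ∈ W, ρ g ∘ₗ f ∘ₗ ρ g⁻¹ ∈ W) ↔
      (∃ α : G →* ℂˣ, α ≠ 1 ∧
        ∃ T : V ≃ₗ[ℂ] V, ∀ (g : G) (v : V), T ((α g : ℂ) • ρ g v) = ρ g (T v))) ∧
    (∀ α : G →* ℂˣ, α ≠ 1 →
      (∃ T : V ≃ₗ[ℂ] V, ∀ (g : G) (v : V), T ((α g : ℂ) • ρ g v) = ρ g (T v)) →
      ∃ f : V →ₗ[ℂ] V, f ∈ LinearMap.ker (LinearMap.trace ℂ V) ∧ f ≠ 0 ∧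
        ∀ g : G, ρ g ∘ₗ f ∘ₗ ρ g⁻¹ = (α g : ℂ) • f) := by
  constructor
  · constructor
    · rintro ⟨W, hWle, hWbot, hWne, hWinv⟩
      obtain ⟨U, hU1, hUle, hUinv⟩ := aux_findline hdim ρ W hWle hWbot hWne hWinv
      have hUbot : U ≠ ⊥ := by
        intro h
        rw [h, finrank_bot] at hU1
        exact one_ne_zero hU1.symm
      obtain ⟨f, hfU, hf0⟩ := Submodule.exists_mem_ne_zero_of_ne_bot hUbot
      have hspan : (ℂ ∙ f) = U := by
        apply Submodule.eq_of_le_of_finrank_le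
        · rwa [Submodule.span_singleton_le_iff_mem]
        · rw [hU1, finrank_span_singleton hf0]
      have hline : ∀ g : G, ∃ c : ℂ, ρ g ∘ₗ f ∘ₗ ρ g⁻¹ = c • f := by
        intro g
        have := hUinv g f hfU
        rw [← hspan] at this
        obtain ⟨a, ha⟩ := Submodule.mem_span_singleton.mp this
        exact ⟨a, ha.symm⟩
      exact aux_line hdim ρ hirr f hf0 (LinearMap.mem_ker.mp (hUle hfU)) hline
    · rintro ⟨α, hα, hT⟩
      obtain ⟨f, hfK, hf0, hfc⟩ := aux_part2 hdim ρ α hα ⟨hT.choose, hT.choose_spec⟩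
      refine ⟨ℂ ∙ f, ?_, ?_, ?_, ?_⟩
      · rw [Submodule.span_singleton_le_iff_mem]; exact hfK
      · rwa [ne_eq, Submodule.span_singleton_eq_bot]
      · intro h
        have h1 : Module.finrank ℂ (ℂ ∙ f) = 1 := finrank_span_singleton hf0
        rw [h, aux_kerdim hdim] at h1
        omega
      · intro g x hx
        obtain ⟨a, ha⟩ := Submodule.mem_span_singleton.mp hx
        rw [← ha]
        have hc : ρ g ∘ₗ (a • f) ∘ₗ ρ g⁻¹ = a • ((α g : ℂ) • f) := by
          rw [← hfc g]
          ext v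
          simp
        rw [hc]
        exact Submodule.smul_mem _ _ (Submodule.smul_mem _ _
          (Submodule.mem_span_singleton_self f))
  · intro α hα hT
    exact aux_part2 hdim ρ α hα hT
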